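/- Let M be a positive integer, let x ≠ 0 be real, and for 1 ≤ m ≤ M set γ_{m,M} = (m−1/2)/M. Define real sequences α_n(x,t), β_n(x,t) by α_1(x,t) = 1/(xt), β_1(x,t) = 1, and for n ≥ 2: α_n(x,t) = α_{n−1}(x,t)(1 − 1/(xt)²) + 2β_{n−1}(x,t)/(xt) and β_n(x,t) = β_{n−1}(x,t)(1 − 1/(xt)²) − 2α_{n−1}(x,t)/(xt). Then the series 2 ∑_{m=1}^M ∑_{n=1}^∞ 1/( (2n−1)(2m−1)^(2n−1) ) · α_n(x,γ_{m,M}) / ( α_n(x,γ_{m,M})² + β_n(x,γ_{m,M})² ) converges (the sum over m being finite and the sum over n convergent for each m) and its value equals arctan(x). -/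

import Mathlib

/-- The pair `(α_{n+1}(x,t), β_{n+1}(x,t))` of the two-step iteration with
`α_1(x,t) = 1/(xt)`, `β_1(x,t) = 1`,
`α_n(x,t) = α_{n-1}(x,t)(1 - 1/(xt)²) + 2 β_{n-1}(x,t)/(xt)` and
`β_n(x,t) = β_{n-1}(x,t)(1 - 1/(xt)²) - 2 α_{n-1}(x,t)/(xt)`. -/
noncomputable def ab (x t : ℝ) : ℕ → ℝ × ℝ
  | 0 => (1 / (x * t), 1)
  | n + 1 =>
      ((ab x t n).1 * (1 - 1 / (x * t) ^ 2) + 2 * (ab x t n).2 / (x * t),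
       (ab x t n).2 * (1 - 1 / (x * t) ^ 2) - 2 * (ab x t n).1 / (x * t))

open Complex in
lemma ab_closed (x t : ℝ) (n : ℕ) :
    ((ab x t n).2 : ℂ) + (ab x t n).1 * I = (1 + ((1 / (x * t) : ℝ) : ℂ) * I) ^ (2 * n + 1) := by
  induction n with
  | zero => simp [ab]
  | succ n ih =>
      rw [show 2 * (n + 1) + 1 = (2 * n + 1) + 2 by ring, pow_add, ← ih]
      show ((ab x t n).2 * (1 - 1 / (x * t) ^ 2) - 2 * (ab x t n).1 / (x * t) : ℝ) +
        ((ab x t n).1 * (1 - 1 / (x * t) ^ 2) + 2 * (ab x t n).2 / (x * t) : ℝ) * I = _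
      push_cast at ih ⊢
      linear_combination (-(2 * ((ab x t n).1 : ℂ) * ((x:ℂ) * t)⁻¹ +
        (((ab x t n).2 : ℂ) + (ab x t n).1 * I) * ((x:ℂ) * t)⁻¹ ^ 2)) * Complex.I_sq

lemma arg_eq_arctan' {z : ℂ} (hz : 0 < z.re) : z.arg = Real.arctan (z.im / z.re) := by
  have habs := abs_lt.mp (Complex.abs_arg_lt_pi_div_two_iff.mpr (Or.inl hz))
  rw [← Complex.tan_arg, Real.arctan_tan (by linarith [habs.1]) habs.2]

set_option maxHeartbeats 1000000 in
open Complex in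
lemma key_hasSum (M : ℕ) (hM : 0 < M) (x : ℝ) (hx : x ≠ 0) (m : ℕ) (hm1 : 1 ≤ m) :
    HasSum (fun n : ℕ =>
      1 / ((2 * (n : ℝ) + 1) * (2 * (m : ℝ) - 1) ^ (2 * n + 1)) *
        ((ab x (((m : ℝ) - 1 / 2) / (M : ℝ)) n).1 /
          ((ab x (((m : ℝ) - 1 / 2) / (M : ℝ)) n).1 ^ 2 +
           (ab x (((m : ℝ) - 1 / 2) / (M : ℝ)) n).2 ^ 2)))
      ((Real.arctan (2 * (m : ℝ) * (x / (2 * M))) -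
        Real.arctan ((2 * (m : ℝ) - 2) * (x / (2 * M)))) / 2) := by
  have hM' : (0 : ℝ) < M := Nat.cast_pos.mpr hM
  have hm' : (1 : ℝ) ≤ (m : ℝ) := Nat.one_le_cast.mpr hm1
  set t : ℝ := ((m : ℝ) - 1 / 2) / (M : ℝ) with ht
  set a : ℝ := x / (2 * M) with ha
  have ha0 : a ≠ 0 := div_ne_zero hx (by positivity)
  have h2m : (0 : ℝ) < 2 * (m : ℝ) - 1 := by linarith
  have hxt : x * t = (2 * (m : ℝ) - 1) * a := by
    rw [ht, ha]; field_simp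
  have hxt0 : x * t ≠ 0 := by rw [hxt]; exact mul_ne_zero (ne_of_gt h2m) ha0
  set D : ℝ := (x * t) ^ 2 + 1 with hD
  have hD0 : (0 : ℝ) < D := by rw [hD]; positivity
  set u : ℂ := (a : ℂ) / ((x * t : ℝ) - I) with hu
  clear_value t a D u
  have hden : ((x * t : ℝ) : ℂ) - I ≠ 0 := by
    intro h
    have := congrArg Complex.im h
    simp at this
  have hure : u.re = x * t * a / D := by
    rw [hu]
    simp [Complex.div_re, Complex.normSq_apply, hD]
    ring
  have huim : u.im = a / D := by
    rw [hu]
    simp [Complex.div_im, Complex.normSq_apply, hD]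
    ring
  have hnormsq : Complex.normSq u = a ^ 2 / D := by
    rw [Complex.normSq_apply, hure, huim, hD]
    field_simp
  have haD : a ^ 2 < D := by
    have h2 : (1:ℝ) ≤ (2 * (m:ℝ) - 1) ^ 2 := by nlinarith
    have : a ^ 2 ≤ (x * t) ^ 2 := by
      rw [hxt, mul_pow]
      nlinarith [sq_nonneg a, h2]
    simp only [hD]; nlinarith
  have hun : ‖u‖ < 1 := by
    rw [← Real.sqrt_one]
    rw [show ‖u‖ = Real.sqrt (Complex.normSq u) by
      rw [Complex.norm_def]]
    apply Real.sqrt_lt_sqrt (Complex.normSq_nonneg u)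
    rw [hnormsq]
    rw [div_lt_one hD0]; exact haD
  -- the series identity
  have h1 := Complex.hasSum_taylorSeries_neg_log hun
  have hun' : ‖-u‖ < 1 := by rwa [norm_neg]
  have h2 := Complex.hasSum_taylorSeries_neg_log hun'
  rw [sub_neg_eq_add] at h2
  have h3 := h1.sub h2
  have hinj : Function.Injective (fun n : ℕ => 2 * n + 1) := fun p q h => by
    simpa using h
  have hzero : ∀ k, k ∉ Set.range (fun n : ℕ => 2 * n + 1) →
      (u ^ k / (k : ℂ) - (-u) ^ k / (k : ℂ)) = 0 := by
    intro k hk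
    have hek : Even k := by
      rcases Nat.even_or_odd k with h | h
      · exact h
      · obtain ⟨j, hj⟩ := h
        refine absurd (Set.mem_range.mpr ⟨j, ?_⟩) hk
        show 2 * j + 1 = k
        omega
    rw [hek.neg_pow]
    ring
  have h4 := (hinj.hasSum_iff hzero).mpr h3
  have hfun : ((fun k : ℕ => u ^ k / (k : ℂ) - (-u) ^ k / (k : ℂ)) ∘ fun n : ℕ => 2 * n + 1)
      = fun n : ℕ => 2 * (u ^ (2 * n + 1) / ((2 * n + 1 : ℕ) : ℂ)) := by
    funext n
    have hodd : (-u) ^ (2 * n + 1) = -(u ^ (2 * n + 1)) := Odd.neg_pow ⟨n, by ring⟩ u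
    simp only [Function.comp_apply, hodd]
    ring
  rw [hfun] at h4
  have hval0 : -Complex.log (1 - u) - -Complex.log (1 + u)
      = Complex.log (1 + u) - Complex.log (1 - u) := by ring
  rw [hval0] at h4
  have h6 := h4.div_const 2
  have hcanc : (fun n : ℕ => 2 * (u ^ (2 * n + 1) / ((2 * n + 1 : ℕ) : ℂ)) / 2)
      = fun n : ℕ => u ^ (2 * n + 1) / ((2 * n + 1 : ℕ) : ℂ) := by
    funext n; ring
  rw [hcanc] at h6
  have hfinal := Complex.hasSum_im h6
  -- identify the terms
  have hxC : (x : ℂ) ≠ 0 := Complex.ofReal_ne_zero.mpr hx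
  have htC : (t : ℂ) ≠ 0 := by
    intro h
    apply hxt0
    have : t = 0 := by exact_mod_cast h
    rw [this, mul_zero]
  have hdenC : (x : ℂ) * t - I ≠ 0 := by
    intro h; apply hden; push_cast; exact h
  have hxtC : (x : ℂ) * t = (2 * (m : ℂ) - 1) * a := by
    have := congrArg (Complex.ofReal) hxt
    push_cast at this
    exact this
  have hukey : u = (((2 * (m : ℝ) - 1 : ℝ) : ℂ) * (1 - ((1 / (x * t) : ℝ) : ℂ) * I))⁻¹ := by
    apply eq_inv_of_mul_eq_one_left
    rw [hu]
    push_cast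
    field_simp
    linear_combination (-1 : ℂ) * hxtC
  have hterm : ∀ n : ℕ, (u ^ (2 * n + 1) / ((2 * n + 1 : ℕ) : ℂ)).im
      = 1 / ((2 * (n : ℝ) + 1) * (2 * (m : ℝ) - 1) ^ (2 * n + 1)) *
        ((ab x t n).1 / ((ab x t n).1 ^ 2 + (ab x t n).2 ^ 2)) := by
    intro n
    have hz := ab_closed x t n
    set Z : ℂ := ((ab x t n).2 : ℂ) + ((ab x t n).1 : ℂ) * I with hZ
    have hNS : Complex.normSq Z = (ab x t n).1 ^ 2 + (ab x t n).2 ^ 2 := by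
      simp [hZ, Complex.normSq_apply]
      ring
    have hconj : (starRingEnd ℂ) (1 + ((1 / (x * t) : ℝ) : ℂ) * I) = 1 - ((1 / (x * t) : ℝ) : ℂ) * I := by
      simp
      ring
    have hZ0 : Z ≠ 0 := by
      rw [hz]
      apply pow_ne_zero
      intro h
      have h' := congrArg Complex.re h
      simp at h'
    have hNS0 : (ab x t n).1 ^ 2 + (ab x t n).2 ^ 2 ≠ 0 := by
      rw [← hNS]
      exact fun h => hZ0 (Complex.normSq_eq_zero.mp h)
    have hvpow : (1 - ((1 / (x * t) : ℝ) : ℂ) * I) ^ (2 * n + 1) = (starRingEnd ℂ) Z := by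
      rw [← hconj, ← map_pow, ← hz]
    have hcinv : ((starRingEnd ℂ) Z)⁻¹ = Z * ((Complex.normSq Z : ℝ) : ℂ)⁻¹ := by
      rw [Complex.inv_def, Complex.normSq_conj, Complex.conj_conj]
      norm_cast
    have hupow : u ^ (2 * n + 1) / ((2 * n + 1 : ℕ) : ℂ)
        = ((((2 * (m:ℝ) - 1) ^ (2 * n + 1))⁻¹ *
            ((ab x t n).1 ^ 2 + (ab x t n).2 ^ 2)⁻¹ * ((2 * n + 1 : ℕ) : ℝ)⁻¹ : ℝ) : ℂ) * Z := by
      rw [hukey, inv_pow, mul_pow, mul_inv, hvpow, hcinv, hNS]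
      push_cast
      ring
    rw [hupow]
    have hZim : Z.im = (ab x t n).1 := by simp [hZ]
    rw [Complex.mul_im, Complex.ofReal_re, Complex.ofReal_im, zero_mul, add_zero, hZim]
    have hA : ((2 * n + 1 : ℕ) : ℝ) ≠ 0 := by positivity
    have hB : (2 * (m:ℝ) - 1) ^ (2 * n + 1) ≠ 0 := pow_ne_zero _ (ne_of_gt h2m)
    push_cast
    field_simp
    try ring
    try tauto
  -- value of the sum
  have hdiv2 : ∀ z : ℂ, (z / 2).im = z.im / 2 := fun z => by
    simp [Complex.div_im, Complex.normSq_apply]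
  have hDp : 0 < D + x * t * a := by
    rw [hD, hxt]
    nlinarith [sq_nonneg ((2 * (m:ℝ) - 1) * a), mul_nonneg h2m.le (sq_nonneg a)]
  have hDm : 0 < D - x * t * a := by
    rw [hD, hxt]
    have h22 : (0:ℝ) ≤ 2 * (m:ℝ) - 2 := by linarith
    nlinarith [mul_nonneg (mul_nonneg h2m.le h22) (sq_nonneg a), sq_nonneg ((2 * (m:ℝ) - 1) * a)]
  have hre1 : (1 + u).re = (D + x * t * a) / D := by
    rw [Complex.add_re, Complex.one_re, hure]
    field_simp
  have him1 : (1 + u).im = a / D := by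
    rw [Complex.add_im, Complex.one_im, huim, zero_add]
  have hre2 : (1 - u).re = (D - x * t * a) / D := by
    rw [Complex.sub_re, Complex.one_re, hure]
    field_simp
  have him2 : (1 - u).im = -(a / D) := by
    rw [Complex.sub_im, Complex.one_im, huim, zero_sub]
  have harg1 : (1 + u).arg
      = Real.arctan (2 * (m:ℝ) * a) - Real.arctan ((2 * (m:ℝ) - 1) * a) := by
    have hc : (2 * (m:ℝ) * a) * (-((2 * (m:ℝ) - 1) * a)) < 1 := by
      nlinarith [mul_nonneg (mul_nonneg (by linarith : (0:ℝ) ≤ 2 * (m:ℝ)) h2m.le) (sq_nonneg a)]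
    have hadd := Real.arctan_add hc
    rw [Real.arctan_neg] at hadd
    rw [arg_eq_arctan' (by rw [hre1]; exact div_pos hDp hD0), hre1, him1]
    have hDp' : (0:ℝ) < ((2 * (m:ℝ) - 1) * a) ^ 2 + 1 + (2 * (m:ℝ) - 1) * a * a := by
      have h' := hDp; rw [hD, hxt] at h'; linarith
    have hne : (0:ℝ) < 1 - 2 * (m:ℝ) * a * -((2 * (m:ℝ) - 1) * a) := by
      nlinarith [mul_nonneg (mul_nonneg (by linarith : (0:ℝ) ≤ 2 * (m:ℝ)) h2m.le) (sq_nonneg a)]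
    rw [show a / D / ((D + x * t * a) / D) = a / (D + x * t * a) from by
      rw [div_div_div_cancel_right₀]
      exact hD0.ne']
    rw [hD, hxt]
    rw [show a / (((2 * (m:ℝ) - 1) * a) ^ 2 + 1 + (2 * (m:ℝ) - 1) * a * a)
        = (2 * (m:ℝ) * a + -((2 * (m:ℝ) - 1) * a)) / (1 - 2 * (m:ℝ) * a * -((2 * (m:ℝ) - 1) * a)) from by
      rw [div_eq_div_iff hDp'.ne' hne.ne']
      ring]
    rw [← hadd]
    ring
  have harg2 : (1 - u).arg
      = Real.arctan ((2 * (m:ℝ) - 2) * a) - Real.arctan ((2 * (m:ℝ) - 1) * a) := by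
    have h22 : (0:ℝ) ≤ 2 * (m:ℝ) - 2 := by linarith
    have hc : ((2 * (m:ℝ) - 2) * a) * (-((2 * (m:ℝ) - 1) * a)) < 1 := by
      nlinarith [mul_nonneg (mul_nonneg h22 h2m.le) (sq_nonneg a)]
    have hadd := Real.arctan_add hc
    rw [Real.arctan_neg] at hadd
    rw [arg_eq_arctan' (by rw [hre2]; exact div_pos hDm hD0), hre2, him2]
    have hDm' : (0:ℝ) < ((2 * (m:ℝ) - 1) * a) ^ 2 + 1 - (2 * (m:ℝ) - 1) * a * a := by
      have h' := hDm; rw [hD, hxt] at h'; linarith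
    have hne : (0:ℝ) < 1 - (2 * (m:ℝ) - 2) * a * -((2 * (m:ℝ) - 1) * a) := by
      nlinarith [mul_nonneg (mul_nonneg h22 h2m.le) (sq_nonneg a)]
    rw [show -(a / D) / ((D - x * t * a) / D) = -a / (D - x * t * a) from by
      rw [neg_div, div_div_div_cancel_right₀, ← neg_div]
      exact hD0.ne']
    rw [hD, hxt]
    rw [show -a / (((2 * (m:ℝ) - 1) * a) ^ 2 + 1 - (2 * (m:ℝ) - 1) * a * a)
        = ((2 * (m:ℝ) - 2) * a + -((2 * (m:ℝ) - 1) * a)) /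
          (1 - (2 * (m:ℝ) - 2) * a * -((2 * (m:ℝ) - 1) * a)) from by
      rw [div_eq_div_iff hDm'.ne' hne.ne']
      ring]
    rw [← hadd]
    ring
  have hsum_im : ((Complex.log (1 + u) - Complex.log (1 - u)) / 2).im
      = (Real.arctan (2 * (m:ℝ) * a) - Real.arctan ((2 * (m:ℝ) - 2) * a)) / 2 := by
    rw [hdiv2, Complex.sub_im, Complex.log_im, Complex.log_im, harg1, harg2]
    ring
  rw [hsum_im] at hfinal
  have hfun2 : (fun n : ℕ => (u ^ (2 * n + 1) / ((2 * n + 1 : ℕ) : ℂ)).im)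
      = fun n : ℕ => 1 / ((2 * (n : ℝ) + 1) * (2 * (m : ℝ) - 1) ^ (2 * n + 1)) *
        ((ab x t n).1 / ((ab x t n).1 ^ 2 + (ab x t n).2 ^ 2)) := funext hterm
  rw [hfun2] at hfinal
  exact hfinal

theorem arctan_generalized_series (M : ℕ) (hM : 0 < M) (x : ℝ) (hx : x ≠ 0) :
    (∀ m ∈ Finset.Icc 1 M, Summable (fun n : ℕ =>
      1 / ((2 * (n : ℝ) + 1) * (2 * (m : ℝ) - 1) ^ (2 * n + 1)) *
        ((ab x (((m : ℝ) - 1 / 2) / (M : ℝ)) n).1 /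
          ((ab x (((m : ℝ) - 1 / 2) / (M : ℝ)) n).1 ^ 2 +
           (ab x (((m : ℝ) - 1 / 2) / (M : ℝ)) n).2 ^ 2)))) ∧
    2 * ∑ m ∈ Finset.Icc 1 M, ∑' n : ℕ,
      1 / ((2 * (n : ℝ) + 1) * (2 * (m : ℝ) - 1) ^ (2 * n + 1)) *
        ((ab x (((m : ℝ) - 1 / 2) / (M : ℝ)) n).1 /
          ((ab x (((m : ℝ) - 1 / 2) / (M : ℝ)) n).1 ^ 2 +
           (ab x (((m : ℝ) - 1 / 2) / (M : ℝ)) n).2 ^ 2))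
      = Real.arctan x := by
  have hkey : ∀ m ∈ Finset.Icc 1 M, HasSum (fun n : ℕ =>
      1 / ((2 * (n : ℝ) + 1) * (2 * (m : ℝ) - 1) ^ (2 * n + 1)) *
        ((ab x (((m : ℝ) - 1 / 2) / (M : ℝ)) n).1 /
          ((ab x (((m : ℝ) - 1 / 2) / (M : ℝ)) n).1 ^ 2 +
           (ab x (((m : ℝ) - 1 / 2) / (M : ℝ)) n).2 ^ 2)))
      ((Real.arctan (2 * (m : ℝ) * (x / (2 * M))) -
        Real.arctan ((2 * (m : ℝ) - 2) * (x / (2 * M)))) / 2) :=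
    fun m hm => key_hasSum M hM x hx m (Finset.mem_Icc.mp hm).1
  refine ⟨fun m hm => (hkey m hm).summable, ?_⟩
  rw [Finset.sum_congr rfl fun m hm => (hkey m hm).tsum_eq]
  have hM' : (0:ℝ) < M := Nat.cast_pos.mpr hM
  have htel : ∑ m ∈ Finset.Icc 1 M,
      (Real.arctan (2 * (m : ℝ) * (x / (2 * M))) -
        Real.arctan ((2 * (m : ℝ) - 2) * (x / (2 * M)))) / 2
      = Real.arctan x / 2 := by
    rw [← Finset.Ico_add_one_right_eq_Icc, Finset.sum_Ico_eq_sum_range]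
    norm_num
    have hcongr : ∀ i ∈ Finset.range M,
        (Real.arctan (2 * (1 + (i : ℝ)) * (x / (2 * M))) -
          Real.arctan ((2 * (1 + (i : ℝ)) - 2) * (x / (2 * M)))) / 2
        = ((fun k : ℕ => Real.arctan (2 * (k : ℝ) * (x / (2 * M)))) (i + 1)
          - (fun k : ℕ => Real.arctan (2 * (k : ℝ) * (x / (2 * M)))) i) / 2 := by
      intro i _
      have e1 : (2 * (1 + (i : ℝ)) * (x / (2 * M)))
          = 2 * (((i + 1 : ℕ)) : ℝ) * (x / (2 * M)) := by push_cast; ring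
      have e2 : ((2 * (1 + (i : ℝ)) - 2) * (x / (2 * M)))
          = 2 * ((i : ℕ) : ℝ) * (x / (2 * M)) := by push_cast; ring
      rw [e1, e2]
    rw [Finset.sum_congr rfl hcongr, ← Finset.sum_div,
      Finset.sum_range_sub (fun k : ℕ => Real.arctan (2 * (k : ℝ) * (x / (2 * M))))]
    rw [show 2 * ((M:ℕ) : ℝ) * (x / (2 * M)) = x from by field_simp]
    norm_num
  rw [htel]
  ring
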